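/- arXiv:1706.01752 — 2 statements merged into one kernel-verified Lean document; each statement's English description precedes it below -/
import Mathlib

section
/- Let ψ₁, …, ψ_n ∈ ℝᵈ and suppose η ∈ ℝᵈ satisfies 1 + ⟨η, ψ_i⟩ > 0 for all i and Σ_{i=1}^n ψ_i / (1 + ⟨η, ψ_i⟩) = 0, and set p_i = 1 / (n (1 + ⟨η, ψ_i⟩)). Then the weights (p_i) maximize the empirical likelihood: for every q ∈ ℝⁿ with q_i ≥ 0 for all i, Σ_{i=1}^n q_i = 1 and Σ_{i=1}^n q_i ψ_i = 0, one has ∏_{i=1}^n q_i ≤ ∏_{i=1}^n p_i (equivalently ∏ n q_i ≤ ∏ n p_i). -/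
open RealInnerProductSpace

/-- The Lagrangian empirical likelihood weights
`p i = 1 / (n (1 + ⟨η, ψ i⟩))` maximize the empirical likelihood: any weights `q`
with `q i ≥ 0`, `∑ q i = 1` and `∑ q i • ψ i = 0` satisfy `∏ q i ≤ ∏ p i`. -/
theorem stmt_4 {n d : ℕ}
    (ψ : Fin n → EuclideanSpace ℝ (Fin d)) (η : EuclideanSpace ℝ (Fin d))
    (hpos : ∀ i, 0 < 1 + ⟪η, ψ i⟫)
    (hlag : ∑ i, (1 + ⟪η, ψ i⟫)⁻¹ • ψ i = 0)
    (p : Fin n → ℝ) (hp : ∀ i, p i = ((n : ℝ) * (1 + ⟪η, ψ i⟫))⁻¹)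
    (q : Fin n → ℝ) (hq0 : ∀ i, 0 ≤ q i) (hq1 : ∑ i, q i = 1)
    (hqψ : ∑ i, q i • ψ i = 0) :
    ∏ i, q i ≤ ∏ i, p i := by
  -- n ≠ 0
  rcases Nat.eq_zero_or_pos n with hn | hn
  · subst hn; simp at hq1
  have hn0 : (0 : ℝ) < n := by exact_mod_cast hn
  have hppos : ∀ i, 0 < p i := by
    intro i
    rw [hp i]
    exact inv_pos.2 (mul_pos hn0 (hpos i))
  -- z i = q i / p i
  set z : Fin n → ℝ := fun i => q i / p i with hz
  have hznn : ∀ i, 0 ≤ z i := fun i => div_nonneg (hq0 i) (hppos i).le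
  -- key: ∑ (1/n) * z i = 1
  have hsum : ∑ i, ((n : ℝ)⁻¹) * z i = 1 := by
    have hinner : ∑ i, q i * ⟪η, ψ i⟫ = 0 := by
      have := congrArg (fun v => ⟪η, v⟫) hqψ
      simpa [inner_sum, real_inner_smul_right, Finset.mul_sum, mul_left_comm, mul_comm, mul_assoc] using this
    have : ∀ i, ((n : ℝ)⁻¹) * z i = q i + q i * ⟪η, ψ i⟫ := by
      intro i
      rw [hz]
      simp only [hp i]
      field_simp
    rw [Finset.sum_congr rfl fun i _ => this i, Finset.sum_add_distrib, hq1, hinner, add_zero]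
  -- AM-GM
  have hAMGM := Real.geom_mean_le_arith_mean_weighted Finset.univ
    (fun _ => (n : ℝ)⁻¹) z (fun i _ => by positivity)
    (by simp [Finset.card_univ, mul_inv_cancel₀ hn0.ne']) (fun i _ => hznn i)
  rw [hsum] at hAMGM
  have hprodz : ∏ i, z i ≤ 1 := by
    have h1 : (∏ i, z i) ^ ((n : ℝ)⁻¹) ≤ 1 := by
      rwa [← Real.finset_prod_rpow _ _ (fun i _ => hznn i)]
    have h2 : ((∏ i, z i) ^ ((n : ℝ)⁻¹)) ^ (n : ℝ) ≤ 1 ^ (n : ℝ) :=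
      Real.rpow_le_rpow (Real.rpow_nonneg (Finset.prod_nonneg fun i _ => hznn i) _) h1 hn0.le
    rwa [← Real.rpow_mul (Finset.prod_nonneg fun i _ => hznn i),
      inv_mul_cancel₀ hn0.ne', Real.rpow_one, Real.one_rpow] at h2
  calc ∏ i, q i = (∏ i, z i) * ∏ i, p i := by
        rw [← Finset.prod_mul_distrib]
        exact Finset.prod_congr rfl fun i _ =>
          (div_mul_cancel₀ (q i) (hppos i).ne').symm
    _ ≤ 1 * ∏ i, p i :=
        mul_le_mul_of_nonneg_right hprodz (Finset.prod_nonneg fun i _ => (hppos i).le)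
    _ = ∏ i, p i := one_mul _
end

section
/- In the setting of the empirical likelihood maximization: let ψ₁, …, ψ_n ∈ ℝᵈ, η ∈ ℝᵈ with 1 + ⟨η, ψ_i⟩ > 0 for all i and Σ_{i=1}^n ψ_i/(1 + ⟨η, ψ_i⟩) = 0, and p_i = 1/(n(1 + ⟨η, ψ_i⟩)). If q ∈ ℝⁿ satisfies q_i ≥ 0, Σ q_i = 1, Σ q_i ψ_i = 0 and ∏_{i=1}^n q_i = ∏_{i=1}^n p_i, then q_i = p_i for every i; that is, the maximizing weights are unique. -/
open RealInnerProductSpace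

/-- Uniqueness of the maximizing empirical likelihood weights: if `q`
is a feasible weight vector (`q i ≥ 0`, `∑ q i = 1`, `∑ q i • ψ i = 0`) attaining the
same product as the Lagrangian weights `p i = 1 / (n (1 + ⟨η, ψ i⟩))`, then `q = p`. -/
theorem stmt_5 {n d : ℕ}
    (ψ : Fin n → EuclideanSpace ℝ (Fin d)) (η : EuclideanSpace ℝ (Fin d))
    (hpos : ∀ i, 0 < 1 + ⟪η, ψ i⟫)
    (hlag : ∑ i, (1 + ⟪η, ψ i⟫)⁻¹ • ψ i = 0)
    (p : Fin n → ℝ) (hp : ∀ i, p i = ((n : ℝ) * (1 + ⟪η, ψ i⟫))⁻¹)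
    (q : Fin n → ℝ) (hq0 : ∀ i, 0 ≤ q i) (hq1 : ∑ i, q i = 1)
    (hqψ : ∑ i, q i • ψ i = 0)
    (heq : ∏ i, q i = ∏ i, p i) :
    ∀ i, q i = p i := by
  intro i
  have hn : 0 < (n : ℝ) := by exact_mod_cast Fin.pos i
  have hcpos : ∀ j, 0 < (n : ℝ) * (1 + ⟪η, ψ j⟫) := fun j => mul_pos hn (hpos j)
  have hppos : ∀ j, 0 < p j := fun j => by rw [hp j]; exact inv_pos.mpr (hcpos j)
  set c : Fin n → ℝ := fun j => (n : ℝ) * (1 + ⟪η, ψ j⟫) with hc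
  set r : Fin n → ℝ := fun j => q j * c j with hr
  have hqr : ∀ j, q j = r j * p j := by
    intro j
    rw [hr, hp j]
    exact (mul_inv_cancel_right₀ (ne_of_gt (hcpos j)) (q j)).symm
  have hprod : ∏ j, r j = 1 := by
    have h1 : ∏ j, p j = (∏ j, c j)⁻¹ := by
      rw [← Finset.prod_inv_distrib]
      exact Finset.prod_congr rfl fun j _ => hp j
    have hcne : (∏ j, c j) ≠ 0 :=
      Finset.prod_ne_zero_iff.mpr fun j _ => ne_of_gt (hcpos j)
    calc ∏ j, r j = (∏ j, q j) * (∏ j, c j) := Finset.prod_mul_distrib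
      _ = (∏ j, c j)⁻¹ * (∏ j, c j) := by rw [heq, h1]
      _ = 1 := inv_mul_cancel₀ hcne
  have hinner : ∑ j, q j * ⟪η, ψ j⟫ = 0 := by
    have : ⟪η, ∑ j, q j • ψ j⟫ = ∑ j, q j * ⟪η, ψ j⟫ := by
      rw [inner_sum]
      exact Finset.sum_congr rfl fun j _ => real_inner_smul_right η (ψ j) (q j)
    rw [← this, hqψ, inner_zero_right]
  have hsum : ∑ j, r j = n := by
    have : ∀ j, r j = (n : ℝ) * q j + (n : ℝ) * (q j * ⟪η, ψ j⟫) := by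
      intro j; simp only [hr, hc]; ring
    rw [Finset.sum_congr rfl fun j _ => this j, Finset.sum_add_distrib,
      ← Finset.mul_sum, ← Finset.mul_sum, hq1, hinner, mul_zero, mul_one, add_zero]
  have hrpos : ∀ j, 0 < r j := by
    intro j
    rcases (mul_nonneg (hq0 j) (le_of_lt (hcpos j))).lt_or_eq with h | h
    · exact h
    · exfalso
      have : ∏ j, r j = 0 := Finset.prod_eq_zero (Finset.mem_univ j) h.symm
      rw [hprod] at this; norm_num at this
  have hlog : ∑ j, Real.log (r j) = 0 := by
    rw [← Real.log_prod fun j _ => ne_of_gt (hrpos j), hprod, Real.log_one]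
  have hri : r i = 1 := by
    by_contra hne
    have hstrict : Real.log (r i) < r i - 1 :=
      Real.log_lt_sub_one_of_pos (hrpos i) hne
    have hlt : ∑ j, Real.log (r j) < ∑ j, (r j - 1) :=
      Finset.sum_lt_sum (fun j _ => Real.log_le_sub_one_of_pos (hrpos j))
        ⟨i, Finset.mem_univ i, hstrict⟩
    rw [hlog, Finset.sum_sub_distrib, hsum] at hlt
    simp at hlt
  rw [hqr i, hri, one_mul]
end
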